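/- Let Σ be a k×k symmetric positive definite matrix, μ ∈ ℝ^k not proportional to 𝟏, μ̃ = 𝟏 + μ, A = Σ + μ̃μ̃', and α̃ > 0 with α̃⁻¹ > 1 + R_GMV. Then the solution w_QU = A⁻¹𝟏/(𝟏'A⁻¹𝟏) + α̃⁻¹(A⁻¹ - (A⁻¹𝟏𝟏'A⁻¹)/(𝟏'A⁻¹𝟏))μ̃ of the quadratic utility problem equals the maximizer of w'μ - (α/2)w'Σw over {w : w'𝟏 = 1} with α = (1 + s)/(α̃⁻¹ - 1 - R_GMV) > 0. -/

import Mathlib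

open Matrix

lemma vmv_mulVec {k : ℕ} (a b x : Fin k → ℝ) :
    vecMulVec a b *ᵥ x = (b ⬝ᵥ x) • a := by
  ext i
  simp only [mulVec, dotProduct, vecMulVec_apply, Pi.smul_apply, smul_eq_mul,
    Finset.sum_mul]
  exact Finset.sum_congr rfl fun j _ => by ring

lemma dot_symm {k : ℕ} {M : Matrix (Fin k) (Fin k) ℝ} (hM : M.IsHermitian)
    (u v : Fin k → ℝ) : u ⬝ᵥ M *ᵥ v = v ⬝ᵥ M *ᵥ u := by
  have hMt : Mᵀ = M := by
    ext i j
    simpa using congrFun (congrFun hM i) j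
  rw [dotProduct_mulVec, ← mulVec_transpose, hMt, dotProduct_comm]

lemma vmv_psd {k : ℕ} (m : Fin k → ℝ) : (vecMulVec m m).PosSemidef := by
  simpa using posSemidef_vecMulVec_self_star m

set_option maxHeartbeats 1000000 in
theorem stmt19 {k : ℕ} (S : Matrix (Fin k) (Fin k) ℝ) (hS : S.PosDef)
    (one : Fin k → ℝ) (hone : one = fun _ => (1:ℝ))
    (μ : Fin k → ℝ) (hμ : ¬ ∃ t : ℝ, μ = t • one)
    (A : Matrix (Fin k) (Fin k) ℝ)
    (hA : A = S + vecMulVec (one + μ) (one + μ))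
    (Q : Matrix (Fin k) (Fin k) ℝ)
    (hQ : Q = S⁻¹ - (one ⬝ᵥ S⁻¹ *ᵥ one)⁻¹ • vecMulVec (S⁻¹ *ᵥ one) (one ᵥ* S⁻¹))
    (Rg s : ℝ)
    (hRg : Rg = (one ⬝ᵥ S⁻¹ *ᵥ μ) / (one ⬝ᵥ S⁻¹ *ᵥ one))
    (hs : s = μ ⬝ᵥ Q *ᵥ μ)
    (αt : ℝ) (hαt : 0 < αt) (hαt2 : αt⁻¹ > 1 + Rg)
    (α : ℝ) (hα : α = (1 + s) / (αt⁻¹ - 1 - Rg))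
    (wQU : Fin k → ℝ)
    (hw : wQU = (one ⬝ᵥ A⁻¹ *ᵥ one)⁻¹ • (A⁻¹ *ᵥ one)
        + αt⁻¹ • ((A⁻¹ - (one ⬝ᵥ A⁻¹ *ᵥ one)⁻¹ • vecMulVec (A⁻¹ *ᵥ one) (one ᵥ* A⁻¹)) *ᵥ (one + μ))) :
    0 < α ∧ wQU ⬝ᵥ one = 1 ∧
    ∀ v : Fin k → ℝ, v ⬝ᵥ one = 1 → v ≠ wQU →
      v ⬝ᵥ μ - α / 2 * (v ⬝ᵥ S *ᵥ v) < wQU ⬝ᵥ μ - α / 2 * (wQU ⬝ᵥ S *ᵥ wQU) := by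
  have hk : k ≠ 0 := by
    rintro rfl
    exact hμ ⟨0, funext fun i => i.elim0⟩
  have hone0 : one ≠ 0 := by
    rw [hone]
    intro h
    have := congrFun h ⟨0, Nat.pos_of_ne_zero hk⟩
    simp at this
  set m : Fin k → ℝ := one + μ with hm
  have hm0 : m ≠ 0 := by
    intro h
    exact hμ ⟨-1, by rw [neg_one_smul]; linear_combination (norm := module) h⟩
  -- positive definiteness
  have hApd : A.PosDef := by rw [hA]; exact hS.add_posSemidef (vmv_psd m)
  have hAipd : A⁻¹.PosDef := hApd.inv
  set B : Matrix (Fin k) (Fin k) ℝ := S⁻¹ with hB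
  have hBpd : B.PosDef := hS.inv
  -- inverse facts
  have hAx : A *ᵥ (A⁻¹ *ᵥ one) = one := by
    rw [mulVec_mulVec, mul_nonsing_inv _ hApd.det_pos.ne'.isUnit, one_mulVec]
  have hAy : A *ᵥ (A⁻¹ *ᵥ m) = m := by
    rw [mulVec_mulVec, mul_nonsing_inv _ hApd.det_pos.ne'.isUnit, one_mulVec]
  have hBS : ∀ v : Fin k → ℝ, B *ᵥ (S *ᵥ v) = v := by
    intro v
    rw [mulVec_mulVec, hB, nonsing_inv_mul _ hS.det_pos.ne'.isUnit, one_mulVec]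
  set x : Fin k → ℝ := A⁻¹ *ᵥ one with hx
  set y : Fin k → ℝ := A⁻¹ *ᵥ m with hy
  -- quadratic form scalars
  set a : ℝ := one ⬝ᵥ B *ᵥ one with ha
  set b : ℝ := one ⬝ᵥ B *ᵥ m with hbdef
  set c : ℝ := m ⬝ᵥ B *ᵥ m with hcdef
  set p : ℝ := one ⬝ᵥ B *ᵥ μ with hp
  set q : ℝ := μ ⬝ᵥ B *ᵥ μ with hq
  set d : ℝ := 1 + c with hd
  have ha0 : 0 < a := by simpa using hBpd.dotProduct_mulVec_pos hone0
  have hc0 : 0 < c := by simpa using hBpd.dotProduct_mulVec_pos hm0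
  have hd0 : 0 < d := by rw [hd]; linarith
  have hbap : b = a + p := by
    rw [hbdef, hm, mulVec_add, dotProduct_add, ← ha, ← hp]
  have hsymB : ∀ u v : Fin k → ℝ, u ⬝ᵥ B *ᵥ v = v ⬝ᵥ B *ᵥ u :=
    dot_symm hBpd.isHermitian
  have hcq : c = a + 2*p + q := by
    rw [hcdef, hm, mulVec_add, dotProduct_add, add_dotProduct, add_dotProduct,
      ← ha, ← hq]
    rw [hsymB μ one, ← hp]
    ring
  -- Sherman-Morrison style relations
  have hSx : S *ᵥ x = one - (m ⬝ᵥ x) • m := by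
    have h1 : S *ᵥ x + (m ⬝ᵥ x) • m = one := by
      conv_rhs => rw [← hAx]
      rw [hA, add_mulVec, vmv_mulVec]
    linear_combination (norm := module) h1
  have hSy : S *ᵥ y = (1 - m ⬝ᵥ y) • m := by
    have h1 : S *ᵥ y + (m ⬝ᵥ y) • m = m := by
      conv_rhs => rw [← hAy]
      rw [hA, add_mulVec, vmv_mulVec]
    linear_combination (norm := module) h1
  have hxB : x = B *ᵥ one - (m ⬝ᵥ x) • (B *ᵥ m) := by
    have := congrArg (fun v => B *ᵥ v) hSx
    simpa [hBS, mulVec_sub, mulVec_smul] using this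
  have hyB : y = (1 - m ⬝ᵥ y) • (B *ᵥ m) := by
    have := congrArg (fun v => B *ᵥ v) hSy
    simpa [hBS, mulVec_smul] using this
  set mx : ℝ := m ⬝ᵥ x with hmxdef
  set my : ℝ := m ⬝ᵥ y with hmydef
  set oy : ℝ := one ⬝ᵥ y with hoydef
  set tx : ℝ := one ⬝ᵥ x with htxdef
  have htx : 0 < tx := by
    rw [htxdef, hx]
    simpa using hAipd.dotProduct_mulVec_pos hone0
  have hmx : mx * d = b := by
    have h1 : mx = b - mx * c := by
      conv_lhs => rw [hmxdef, hxB]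
      rw [dotProduct_sub, dotProduct_smul, hsymB m one, ← hbdef, ← hcdef,
        smul_eq_mul]
    linear_combination h1 + mx * hd
  have hmy : my * d = c := by
    have h1 : my = (1 - my) * c := by
      conv_lhs => rw [hmydef, hyB]
      rw [dotProduct_smul, ← hcdef, smul_eq_mul]
    linear_combination h1 + my * hd
  have hoy : oy * d = b := by
    have h1 : oy = (1 - my) * b := by
      conv_lhs => rw [hoydef, hyB]
      rw [dotProduct_smul, ← hbdef, smul_eq_mul]
    linear_combination d * h1 - b * hmy + b * hd
  have htxa : tx * d = a * d - b * b := by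
    have h1 : tx = a - mx * b := by
      conv_lhs => rw [htxdef, hxB]
      rw [dotProduct_sub, dotProduct_smul, ← ha, ← hbdef, smul_eq_mul]
    linear_combination d * h1 - b * hmx
  -- s and Rg
  have hainv : a * a⁻¹ = 1 := mul_inv_cancel₀ ha0.ne'
  have hsval : s * a = q * a - p * p := by
    have hQμ : Q *ᵥ μ = B *ᵥ μ - (a⁻¹ * p) • (B *ᵥ one) := by
      rw [hQ, sub_mulVec, smul_mulVec, vmv_mulVec]
      have h2 : (one ᵥ* B) ⬝ᵥ μ = p := by rw [← dotProduct_mulVec, ← hp]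
      rw [h2, smul_smul]
    have h3 : s = q - a⁻¹ * p * p := by
      rw [hs, hQμ, dotProduct_sub, dotProduct_smul, ← hq, hsymB μ one, ← hp,
        smul_eq_mul]
    linear_combination a * h3 - p * p * hainv
  have hRga : Rg * a = p := by
    rw [hRg]
    field_simp
  -- s > 0
  have hs0 : 0 < s := by
    set u : Fin k → ℝ := μ - (p / a) • one with hu
    have hu0 : u ≠ 0 := by
      intro h
      apply hμ
      exact ⟨p / a, by linear_combination (norm := module) h⟩
    have huB : 0 < u ⬝ᵥ B *ᵥ u := by simpa using hBpd.dotProduct_mulVec_pos hu0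
    have hval : (u ⬝ᵥ B *ᵥ u) * a = q * a - p * p := by
      rw [hu, mulVec_sub, mulVec_smul, dotProduct_sub, sub_dotProduct,
        sub_dotProduct, dotProduct_smul, smul_dotProduct, smul_dotProduct,
        dotProduct_smul, ← hq, hsymB μ one, ← hp, ← ha]
      simp only [smul_eq_mul]
      field_simp
      ring
    have h6 : 0 < s * a := by
      rw [hsval, ← hval]
      exact mul_pos huB ha0
    by_contra hcon
    push_neg at hcon
    have : s * a ≤ 0 := mul_nonpos_of_nonpos_of_nonneg hcon ha0.le
    linarith
  have hden : 0 < αt⁻¹ - 1 - Rg := by linarith [hαt2]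
  have h1s : (0:ℝ) < 1 + s := by linarith
  have hα0 : 0 < α := by rw [hα]; positivity
  -- rewrite wQU
  have hinner : (A⁻¹ - tx⁻¹ • vecMulVec x (one ᵥ* A⁻¹)) *ᵥ m
      = y - (tx⁻¹ * oy) • x := by
    rw [sub_mulVec, smul_mulVec, vmv_mulVec, ← hy]
    have h2 : (one ᵥ* A⁻¹) ⬝ᵥ m = oy := by
      rw [← dotProduct_mulVec, ← hy, ← hoydef]
    rw [h2, smul_smul]
  have hw' : wQU = tx⁻¹ • x + αt⁻¹ • (y - (tx⁻¹ * oy) • x) := by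
    rw [hw, hinner]
  -- λ and β
  set lam : ℝ := tx⁻¹ * (1 - αt⁻¹ * oy) with hlam
  set β : ℝ := αt⁻¹ * (1 - my) - lam * mx with hβ
  have hSw : S *ᵥ wQU = lam • one + β • m := by
    rw [hw', mulVec_add, mulVec_smul, mulVec_smul, mulVec_sub, mulVec_smul,
      hSx, hSy, hβ, hlam]
    module
  -- key scalar identity
  have htxinv : tx⁻¹ * tx = 1 := inv_mul_cancel₀ htx.ne'
  have h1my : (1 - my) * d = 1 := by linear_combination hd - hmy
  have htx1s : tx * d = a * (1 + s) := by
    linear_combination htxa + a * hd + a * hcq - (b + a + p) * hbap - hsval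
  have htxoy : tx + oy * b = a := by
    apply mul_right_cancel₀ hd0.ne'
    linear_combination htxa + b * hoy
  have hβtx : β * (tx * d) = αt⁻¹ * a - b := by
    rw [hβ, hlam]
    linear_combination (αt⁻¹ * tx) * h1my
      - ((1 - αt⁻¹ * oy) * mx * d) * htxinv
      - (1 - αt⁻¹ * oy) * hmx + αt⁻¹ * htxoy
  have hβval : β * (1 + s) = αt⁻¹ - 1 - Rg := by
    apply mul_right_cancel₀ ha0.ne'
    have h4 : αt⁻¹ * a - b = (αt⁻¹ - 1 - Rg) * a := by
      linear_combination -hbap + hRga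
    calc β * (1 + s) * a = β * (tx * d) := by linear_combination (-β) * htx1s
    _ = αt⁻¹ * a - b := hβtx
    _ = (αt⁻¹ - 1 - Rg) * a := h4
  have hαβ : α * β = 1 := by
    rw [hα, div_mul_eq_mul_div, div_eq_iff hden.ne', one_mul]
    linear_combination hβval
  -- part 2 : wQU ⬝ᵥ one = 1
  have hw1 : wQU ⬝ᵥ one = 1 := by
    rw [hw', add_dotProduct, smul_dotProduct, smul_dotProduct, sub_dotProduct,
      smul_dotProduct]
    rw [dotProduct_comm x one, ← htxdef, dotProduct_comm y one, ← hoydef]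
    simp only [smul_eq_mul]
    field_simp
    ring
  refine ⟨hα0, hw1, ?_⟩
  intro v hv1 hvne
  set e : Fin k → ℝ := v - wQU with he
  clear_value e
  have he0 : e ≠ 0 := by rw [he]; exact sub_ne_zero.mpr hvne
  have he1 : e ⬝ᵥ one = 0 := by
    rw [he, sub_dotProduct, hv1, hw1, sub_self]
  have hquad : 0 < e ⬝ᵥ S *ᵥ e := by simpa using hS.dotProduct_mulVec_pos he0
  have heSw : e ⬝ᵥ S *ᵥ wQU = β * (e ⬝ᵥ μ) := by
    rw [hSw, dotProduct_add, dotProduct_smul, dotProduct_smul, he1, hm,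
      dotProduct_add, he1]
    simp [smul_eq_mul]
  have hsymS : wQU ⬝ᵥ S *ᵥ e = e ⬝ᵥ S *ᵥ wQU := dot_symm hS.isHermitian _ _
  have hv : v = wQU + e := by rw [he]; abel
  have hvv : v ⬝ᵥ S *ᵥ v
      = wQU ⬝ᵥ S *ᵥ wQU + 2 * (e ⬝ᵥ S *ᵥ wQU) + e ⬝ᵥ S *ᵥ e := by
    rw [hv, mulVec_add, dotProduct_add, add_dotProduct, add_dotProduct, hsymS]
    ring
  have hvμ : v ⬝ᵥ μ = wQU ⬝ᵥ μ + e ⬝ᵥ μ := by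
    rw [hv, add_dotProduct]
  have hkey : α * (β * (e ⬝ᵥ μ)) = e ⬝ᵥ μ := by
    rw [← mul_assoc, hαβ, one_mul]
  have h7 : 0 < α * (e ⬝ᵥ S *ᵥ e) := mul_pos hα0 hquad
  rw [hvv, hvμ, heSw]
  have h9 : wQU ⬝ᵥ μ + e ⬝ᵥ μ
      - α / 2 * (wQU ⬝ᵥ S *ᵥ wQU + 2 * (β * (e ⬝ᵥ μ)) + e ⬝ᵥ S *ᵥ e)
      = wQU ⬝ᵥ μ - α / 2 * (wQU ⬝ᵥ S *ᵥ wQU) - α * (e ⬝ᵥ S *ᵥ e) / 2 := by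
    linear_combination -hkey
  rw [h9]
  linarith [h7]
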